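/- Let β ≥ 1 and k = ⌈log₂(2β)⌉ + 1. Define the row vector g₁ = (⌊(2β+1)/2⌋, ⌊(2β+2)/4⌋, …, ⌊(2β+2^{k-1})/2^k⌋) ∈ ℤ^k. Then an integer a satisfies 0 ≤ a ≤ 2β if and only if there exists a binary vector 𝐚 ∈ {0,1}^k such that g₁ · 𝐚 = a. -/

import Mathlib

private lemma lnsw_step (B j : ℕ) :
    (B + 2 ^ (j+1)) / 2 ^ (j+2) = (B / 2 + 2 ^ j) / 2 ^ (j+1) := by
  rw [pow_succ 2 (j+1), Nat.mul_comm, ← Nat.div_div_eq_div_mul]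
  congr 1
  have h : (2:ℕ) ^ (j+1) = 2 ^ j * 2 := by ring
  rw [h, Nat.add_mul_div_right _ _ (by norm_num : 0 < 2)]

private lemma lnsw_sum : ∀ k B : ℕ, B ≤ 2 ^ k →
    ∑ j ∈ Finset.range (k+1), (B + 2 ^ j) / 2 ^ (j+1) = B := by
  intro k
  induction k with
  | zero => intro B hB; interval_cases B <;> simp
  | succ k ih =>
    intro B hB
    rw [Finset.sum_range_succ']
    have h1 : ∀ j ∈ Finset.range (k+1),
        (B + 2 ^ (j+1)) / 2 ^ ((j+1)+1) = (B/2 + 2^j) / 2^(j+1) := by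
      intro j _; exact lnsw_step B j
    rw [Finset.sum_congr rfl h1, ih (B/2) (by
      have : (2:ℕ) ^ (k+1) = 2 * 2 ^ k := by ring
      omega)]
    norm_num
    omega

private lemma lnsw_repr : ∀ k B a : ℕ, B ≤ 2 ^ k → a ≤ B →
    ∃ v : ℕ → ℕ, (∀ j, v j ≤ 1) ∧
      ∑ j ∈ Finset.range (k+1), (B + 2 ^ j) / 2 ^ (j+1) * v j = a := by
  intro k
  induction k with
  | zero =>
    intro B a hB ha
    refine ⟨fun _ => a, fun j => le_trans ha hB, ?_⟩
    simp only [Finset.sum_range_one]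
    interval_cases B <;> interval_cases a <;> simp
  | succ k ih =>
    intro B a hB ha
    have hB2 : B / 2 ≤ 2 ^ k := by
      have : (2:ℕ) ^ (k+1) = 2 * 2 ^ k := by ring
      omega
    by_cases hc : a ≤ B / 2
    · obtain ⟨v, hv1, hv2⟩ := ih (B/2) a hB2 hc
      refine ⟨fun j => if j = 0 then 0 else v (j-1), fun j => by dsimp; split <;> [omega; exact hv1 _], ?_⟩
      rw [Finset.sum_range_succ']
      simp only [Nat.add_sub_cancel, if_neg (Nat.succ_ne_zero _), if_pos rfl, Nat.mul_zero, Nat.add_zero]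
      have h1 : ∀ j ∈ Finset.range (k+1),
          (B + 2 ^ (j+1)) / 2 ^ ((j+1)+1) * v j = (B/2 + 2^j) / 2^(j+1) * v j := by
        intro j _; rw [lnsw_step B j]
      rw [Finset.sum_congr rfl h1, hv2]
      simp
    · obtain ⟨v, hv1, hv2⟩ := ih (B/2) (a - (B+1)/2) hB2 (by omega)
      refine ⟨fun j => if j = 0 then 1 else v (j-1), fun j => by dsimp; split <;> [omega; exact hv1 _], ?_⟩
      rw [Finset.sum_range_succ']
      simp only [Nat.add_sub_cancel, if_neg (Nat.succ_ne_zero _), if_pos rfl, Nat.mul_one]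
      have h1 : ∀ j ∈ Finset.range (k+1),
          (B + 2 ^ (j+1)) / 2 ^ ((j+1)+1) * v j = (B/2 + 2^j) / 2^(j+1) * v j := by
        intro j _; rw [lnsw_step B j]
      rw [Finset.sum_congr rfl h1, hv2]
      simp
      omega

theorem lnsw_decomposition (β : ℕ) (hβ : 1 ≤ β) (a : ℤ) :
    (0 ≤ a ∧ a ≤ 2 * (β : ℤ)) ↔
      ∃ v : Fin (Nat.clog 2 (2 * β) + 1) → Fin 2,
        ∑ j : Fin (Nat.clog 2 (2 * β) + 1),
          ((2 * (β : ℤ) + 2 ^ (j : ℕ)) / 2 ^ ((j : ℕ) + 1)) * ((v j : ℕ) : ℤ) = a := by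
  set N := Nat.clog 2 (2 * β) with hN
  have hle : 2 * β ≤ 2 ^ N := Nat.le_pow_clog (by norm_num) _
  constructor
  · rintro ⟨h0, h1⟩
    obtain ⟨v, hv1, hv2⟩ := lnsw_repr N (2*β) a.toNat hle (by omega)
    refine ⟨fun j => ⟨v j, by have := hv1 (j:ℕ); omega⟩, ?_⟩
    have : ((∑ j ∈ Finset.range (N+1), (2*β + 2 ^ j) / 2 ^ (j+1) * v j : ℕ) : ℤ) = a := by
      rw [hv2]; omega
    rw [← this, Nat.cast_sum, Fin.sum_univ_eq_sum_range
      (fun j => ((2 * (β:ℤ) + 2 ^ j) / 2 ^ (j + 1)) * ((v j : ℕ) : ℤ))]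
    refine Finset.sum_congr rfl fun j _ => ?_
    push_cast [Int.natCast_ediv]
    ring
  · rintro ⟨v, hv⟩
    have hterm : ∀ j : Fin (N+1), (0:ℤ) ≤ (2 * (β:ℤ) + 2 ^ (j:ℕ)) / 2 ^ ((j:ℕ) + 1) := by
      intro j
      apply Int.ediv_nonneg <;> positivity
    constructor
    · rw [← hv]
      apply Finset.sum_nonneg
      intro j _
      have := hterm j
      positivity
    · rw [← hv]
      have hsum : ∑ j : Fin (N+1), (2 * (β:ℤ) + 2 ^ (j:ℕ)) / 2 ^ ((j:ℕ) + 1) = 2 * β := by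
        rw [Fin.sum_univ_eq_sum_range (fun j => (2 * (β:ℤ) + 2 ^ j) / 2 ^ (j + 1))]
        have hcong : ∀ j ∈ Finset.range (N+1),
            (2*(β:ℤ)+2^j)/2^(j+1) = (((2*β+2^j)/2^(j+1) : ℕ) : ℤ) := by
          intro j _
          push_cast [Int.natCast_ediv]
          ring
        rw [Finset.sum_congr rfl hcong, ← Nat.cast_sum, lnsw_sum N (2*β) hle]
        push_cast
        ring
      calc ∑ j : Fin (N+1), (2 * (β:ℤ) + 2 ^ (j:ℕ)) / 2 ^ ((j:ℕ) + 1) * ((v j : ℕ) : ℤ)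
          ≤ ∑ j : Fin (N+1), (2 * (β:ℤ) + 2 ^ (j:ℕ)) / 2 ^ ((j:ℕ) + 1) := by
            apply Finset.sum_le_sum
            intro j _
            have h2 : ((v j : ℕ) : ℤ) ≤ 1 := by
              have := (v j).is_lt; omega
            nlinarith [hterm j, Int.natCast_nonneg (v j : ℕ)]
        _ = 2 * β := hsum
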